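/- Let Γ be a finite group, H a minimal normal subgroup of Γ with quotient G = Γ/H and quotient map α. Let φ₁, φ₂: Θ → Γ be surjective homomorphisms from a group Θ with α∘φ₁ = α∘φ₂ and ker φ₁ ≠ ker φ₂. Then the induced map φ = (φ₁, φ₂): Θ → Γ ×_G Γ to the fiber product is surjective. -/
import Mathlib


/-- `H` is a minimal normal subgroup: nontrivial, normal, and containing no
nontrivial proper normal subgroup of the ambient group. -/
def IsMinimalNormal {Γ : Type} [Group Γ] (H : Subgroup Γ) : Prop :=
  H.Normal ∧ H ≠ ⊥ ∧ ∀ K : Subgroup Γ, K.Normal → K ≤ H → K = ⊥ ∨ K = H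

/-- If the image of `ker φ₂` under `φ₁` is all of `ker α`, then the induced map to the
fiber product is surjective. -/
lemma key_aux {Γ G Θ : Type} [Group Γ] [Group G] [Group Θ]
    (α : Γ →* G) (φ₁ φ₂ : Θ →* Γ)
    (hcomp : α.comp φ₁ = α.comp φ₂)
    (hH : Subgroup.map φ₁ φ₂.ker = α.ker)
    (hs2 : Function.Surjective φ₂) :
    ∀ p : Γ × Γ, α p.1 = α p.2 → ∃ θ : Θ, φ₁ θ = p.1 ∧ φ₂ θ = p.2 := by
  intro ⟨a, b⟩ hab
  obtain ⟨θ, hθ⟩ := hs2 b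
  have hαθ : α (φ₁ θ) = α b := by
    rw [← hθ]
    exact DFunLike.congr_fun hcomp θ
  have h1 : a * (φ₁ θ)⁻¹ ∈ Subgroup.map φ₁ φ₂.ker := by
    rw [hH, MonoidHom.mem_ker, map_mul, map_inv, hαθ, hab]
    simp
  obtain ⟨k, hk, hφk⟩ := h1
  refine ⟨k * θ, ?_, ?_⟩
  · rw [map_mul, hφk]; group
  · rw [map_mul, hk, one_mul, hθ]

theorem stmt2 {Γ G Θ : Type} [Group Γ] [Finite Γ] [Group G] [Group Θ]
    (α : Γ →* G) (hα : Function.Surjective α)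
    (hmin : IsMinimalNormal α.ker)
    (φ₁ φ₂ : Θ →* Γ)
    (hs1 : Function.Surjective φ₁) (hs2 : Function.Surjective φ₂)
    (hcomp : α.comp φ₁ = α.comp φ₂) (hker : φ₁.ker ≠ φ₂.ker) :
    ∀ p : Γ × Γ, α p.1 = α p.2 → ∃ θ : Θ, φ₁ θ = p.1 ∧ φ₂ θ = p.2 := by
  obtain ⟨-, -, hminK⟩ := hmin
  have hle1 : Subgroup.map φ₁ φ₂.ker ≤ α.ker := by
    rintro x ⟨k, hk, rfl⟩
    have : α (φ₁ k) = α (φ₂ k) := DFunLike.congr_fun hcomp k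
    rw [MonoidHom.mem_ker, this, hk, map_one]
  have hle2 : Subgroup.map φ₂ φ₁.ker ≤ α.ker := by
    rintro x ⟨k, hk, rfl⟩
    have : α (φ₁ k) = α (φ₂ k) := DFunLike.congr_fun hcomp k
    rw [MonoidHom.mem_ker, ← this, hk, map_one]
  have hn1 : (Subgroup.map φ₁ φ₂.ker).Normal := Subgroup.Normal.map φ₂.normal_ker φ₁ hs1
  have hn2 : (Subgroup.map φ₂ φ₁.ker).Normal := Subgroup.Normal.map φ₁.normal_ker φ₂ hs2
  rcases hminK _ hn1 hle1 with h1 | h1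
  · rcases hminK _ hn2 hle2 with h2 | h2
    · exfalso
      apply hker
      have e1 : φ₂.ker ≤ φ₁.ker := (Subgroup.map_eq_bot_iff _).mp h1
      have e2 : φ₁.ker ≤ φ₂.ker := (Subgroup.map_eq_bot_iff _).mp h2
      exact le_antisymm e2 e1
    · intro p hp
      obtain ⟨θ, h₂, h₁⟩ := key_aux α φ₂ φ₁ hcomp.symm h2 hs1 (p.2, p.1) hp.symm
      exact ⟨θ, h₁, h₂⟩
  · exact key_aux α φ₁ φ₂ hcomp h1 hs2
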